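/- For every finite simple graph G, nucleus(G) ⊆ diadem(G) being bounded as in |nucleus(G)| + |diadem(G)| ≤ 2·α(G) implies in particular |diadem(G)| ≤ 2·α(G) − |nucleus(G)|; more precisely, if I_1, …, I_m enumerate all maximum-cardinality critical independent sets of G, then |⋃_{j=1}^m I_j| ≤ 2·α(G) − |⋂_{j=1}^m I_j|. -/

import Mathlib

variable {V : Type*} [Fintype V] [DecidableEq V]

/-- `S` is an independent set of `G`. -/
def IsIndep (G : SimpleGraph V) (S : Set V) : Prop :=
  ∀ ⦃u⦄, u ∈ S → ∀ ⦃v⦄, v ∈ S → ¬ G.Adj u v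

/-- The independence number `α(G)`: the maximum cardinality of an independent set. -/
noncomputable def indepNum (G : SimpleGraph V) : ℕ :=
  sSup {n : ℕ | ∃ S : Set V, IsIndep G S ∧ S.ncard = n}

/-- `S` is a maximum independent set of `G`. -/
def IsMaxIndep (G : SimpleGraph V) (S : Set V) : Prop :=
  IsIndep G S ∧ ∀ T : Set V, IsIndep G T → T.ncard ≤ S.ncard

/-- The neighborhood `N(X)` of a set of vertices `X`. -/
def nbhdSet (G : SimpleGraph V) (X : Set V) : Set V :=
  {v | ∃ u ∈ X, G.Adj u v}

/-- The difference `d_G(X) = |X| - |N(X)|` of a vertex set `X`. -/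
noncomputable def diffSet (G : SimpleGraph V) (X : Set V) : ℤ :=
  (X.ncard : ℤ) - ((nbhdSet G X).ncard : ℤ)

/-- `I` is a critical independent set of `G`. -/
def IsCriticalIndep (G : SimpleGraph V) (I : Set V) : Prop :=
  IsIndep G I ∧ ∀ J : Set V, IsIndep G J → diffSet G J ≤ diffSet G I

/-- `I` is a maximum-cardinality critical independent set of `G`. -/
def IsMaxCriticalIndep (G : SimpleGraph V) (I : Set V) : Prop :=
  IsCriticalIndep G I ∧ ∀ J : Set V, IsCriticalIndep G J → J.ncard ≤ I.ncard

/-- `core(G)`: the intersection of all maximum independent sets of `G`. -/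
def coreSet (G : SimpleGraph V) : Set V := ⋂₀ {S : Set V | IsMaxIndep G S}

/-- `corona(G)`: the union of all maximum independent sets of `G`. -/
def coronaSet (G : SimpleGraph V) : Set V := ⋃₀ {S : Set V | IsMaxIndep G S}

/-- `ker(G)`: the intersection of all critical independent sets of `G`. -/
def kerSet (G : SimpleGraph V) : Set V := ⋂₀ {S : Set V | IsCriticalIndep G S}

/-- `diadem(G)`: the union of all critical independent sets of `G`. -/
def diademSet (G : SimpleGraph V) : Set V := ⋃₀ {S : Set V | IsCriticalIndep G S}

/-- `nucleus(G)`: the intersection of all maximum-cardinality critical independent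
sets of `G`. -/
def nucleusSet (G : SimpleGraph V) : Set V := ⋂₀ {S : Set V | IsMaxCriticalIndep G S}

/-- `C` is the vertex set of some odd cycle of `G`. -/
def IsOddCycleVertexSet (G : SimpleGraph V) (C : Set V) : Prop :=
  ∃ (v : V) (w : G.Walk v v), w.IsCycle ∧ Odd w.length ∧ {x | x ∈ w.support} = C

/-- The maximum cardinality of a set of pairwise vertex-distinct odd cycles of `G`,
i.e. the number of distinct vertex sets of odd cycles of `G`. -/
noncomputable def numVertexDistinctOddCycles (G : SimpleGraph V) : ℕ :=
  {C : Set V | IsOddCycleVertexSet G C}.ncard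

/-- `E` is the edge set of some odd cycle of `G`. -/
def IsOddCycleEdgeSet (G : SimpleGraph V) (E : Set (Sym2 V)) : Prop :=
  ∃ (v : V) (w : G.Walk v v), w.IsCycle ∧ Odd w.length ∧ {e | e ∈ w.edges} = E

/-- The number of (distinct) odd cycles of `G`, where a cycle is identified with
its edge set. -/
noncomputable def numOddCycles (G : SimpleGraph V) : ℕ :=
  {E : Set (Sym2 V) | IsOddCycleEdgeSet G E}.ncard

section Aux

variable (G : SimpleGraph V)

lemma nbhdSet_mono {X Y : Set V} (h : X ⊆ Y) : nbhdSet G X ⊆ nbhdSet G Y := by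
  rintro v ⟨u, hu, ha⟩; exact ⟨u, h hu, ha⟩

lemma indep_subset {A B : Set V} (hB : IsIndep G B) (h : A ⊆ B) : IsIndep G A :=
  fun _ hu _ hv => hB (h hu) (h hv)

lemma reduce_indep (U : Set V) : IsIndep G (U \ nbhdSet G U) := by
  intro u hu v hv hadj
  exact hv.2 ⟨u, hu.1, hadj⟩

lemma reduce_diff (U : Set V) : diffSet G U ≤ diffSet G (U \ nbhdSet G U) := by
  set A := U \ nbhdSet G U with hAdef
  have e1 : A.ncard + (U ∩ nbhdSet G U).ncard = U.ncard := by
    rw [show A = U \ (U ∩ nbhdSet G U) by rw [hAdef, Set.diff_self_inter]]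
    exact Set.ncard_diff_add_ncard_of_subset Set.inter_subset_left
  have hsub : nbhdSet G A ⊆ nbhdSet G U \ (U ∩ nbhdSet G U) := by
    rintro v ⟨a, ⟨haU, haN⟩, hadj⟩
    exact ⟨⟨a, haU, hadj⟩, fun hv => haN ⟨v, hv.1, hadj.symm⟩⟩
  have e2 : (nbhdSet G U \ (U ∩ nbhdSet G U)).ncard + (U ∩ nbhdSet G U).ncard
      = (nbhdSet G U).ncard :=
    Set.ncard_diff_add_ncard_of_subset Set.inter_subset_right
  have e3 : (nbhdSet G A).ncard ≤ (nbhdSet G U \ (U ∩ nbhdSet G U)).ncard :=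
    Set.ncard_le_ncard hsub
  unfold diffSet
  omega

lemma crit_ge_all {I : Set V} (hI : IsCriticalIndep G I) (U : Set V) :
    diffSet G U ≤ diffSet G I :=
  le_trans (reduce_diff G U) (hI.2 _ (reduce_indep G U))

lemma nbhdSet_union (X Y : Set V) :
    nbhdSet G (X ∪ Y) = nbhdSet G X ∪ nbhdSet G Y := by
  ext v
  constructor
  · rintro ⟨u, hu | hu, ha⟩
    · exact Or.inl ⟨u, hu, ha⟩
    · exact Or.inr ⟨u, hu, ha⟩
  · rintro (⟨u, hu, ha⟩ | ⟨u, hu, ha⟩)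
    · exact ⟨u, Or.inl hu, ha⟩
    · exact ⟨u, Or.inr hu, ha⟩

lemma supermod (X Y : Set V) :
    diffSet G X + diffSet G Y ≤ diffSet G (X ∪ Y) + diffSet G (X ∩ Y) := by
  have e1 : (X ∪ Y).ncard + (X ∩ Y).ncard = X.ncard + Y.ncard :=
    Set.ncard_union_add_ncard_inter X Y (Set.toFinite X) (Set.toFinite Y)
  have e2 : nbhdSet G (X ∪ Y) = nbhdSet G X ∪ nbhdSet G Y := nbhdSet_union G X Y
  have e3 : nbhdSet G (X ∩ Y) ⊆ nbhdSet G X ∩ nbhdSet G Y := by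
    rintro v ⟨u, hu, ha⟩; exact ⟨⟨u, hu.1, ha⟩, ⟨u, hu.2, ha⟩⟩
  have e4 : (nbhdSet G X ∪ nbhdSet G Y).ncard + (nbhdSet G X ∩ nbhdSet G Y).ncard
      = (nbhdSet G X).ncard + (nbhdSet G Y).ncard :=
    Set.ncard_union_add_ncard_inter _ _ (Set.toFinite _) (Set.toFinite _)
  have e5 : (nbhdSet G (X ∩ Y)).ncard ≤ (nbhdSet G X ∩ nbhdSet G Y).ncard :=
    Set.ncard_le_ncard e3
  unfold diffSet
  rw [e2]
  omega

/-- Hall-type matching for a critical independent set: an injection from `N(A)`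
into `A` matching each vertex of `N(A)` to a neighbour in `A`. -/
lemma crit_hall {A : Set V} (hA : IsCriticalIndep G A) :
    ∃ g : V → V, Set.InjOn g (nbhdSet G A) ∧
      ∀ x ∈ nbhdSet G A, g x ∈ A ∧ G.Adj x (g x) := by
  classical
  set NA := nbhdSet G A with hNAdef
  let t : NA → Finset V := fun x => (Set.toFinite {a | a ∈ A ∧ G.Adj (↑x) a}).toFinset
  have hmem : ∀ (x : NA) (a : V), a ∈ t x ↔ a ∈ A ∧ G.Adj (↑x) a := by
    intro x a
    simp [t, Set.Finite.mem_toFinset]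
  have hall : ∀ s : Finset NA, s.card ≤ (s.biUnion t).card := by
    intro s
    set T : Set V := ↑(s.image Subtype.val) with hTdef
    have hTsub : T ⊆ NA := by
      rintro v hv
      rw [hTdef] at hv
      simp only [Finset.coe_image, Set.mem_image] at hv
      obtain ⟨x, _, rfl⟩ := hv
      exact x.2
    have hTcard : T.ncard = s.card := by
      rw [hTdef, Set.ncard_coe_finset, Finset.card_image_of_injective _ Subtype.val_injective]
    have hbi : ↑(s.biUnion t) = A ∩ nbhdSet G T := by
      ext a
      simp only [Finset.coe_biUnion, Set.mem_iUnion, Finset.mem_coe, Set.mem_inter_iff]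
      constructor
      · rintro ⟨x, hx, hax⟩
        obtain ⟨haA, hadj⟩ := (hmem x a).1 hax
        refine ⟨haA, ⟨↑x, ?_, hadj⟩⟩
        rw [hTdef]
        simp only [Finset.coe_image, Set.mem_image]
        exact ⟨x, hx, rfl⟩
      · rintro ⟨haA, u, huT, hadj⟩
        rw [hTdef] at huT
        simp only [Finset.coe_image, Set.mem_image] at huT
        obtain ⟨x, hx, rfl⟩ := huT
        exact ⟨x, hx, (hmem x a).2 ⟨haA, hadj⟩⟩
    set A' := A \ nbhdSet G T with hA'def
    have hA'ind : IsIndep G A' := indep_subset G hA.1 Set.diff_subset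
    have hsub1 : nbhdSet G A' ⊆ NA \ T := by
      rintro v ⟨a, ⟨haA, haN⟩, hadj⟩
      exact ⟨⟨a, haA, hadj⟩, fun hvT => haN ⟨v, hvT, hadj.symm⟩⟩
    have e1 : A'.ncard + (A ∩ nbhdSet G T).ncard = A.ncard := by
      rw [show A' = A \ (A ∩ nbhdSet G T) by rw [hA'def, Set.diff_self_inter]]
      exact Set.ncard_diff_add_ncard_of_subset Set.inter_subset_left
    have e2 : (NA \ T).ncard + T.ncard = NA.ncard :=
      Set.ncard_diff_add_ncard_of_subset hTsub
    have e3 : (nbhdSet G A').ncard ≤ (NA \ T).ncard := Set.ncard_le_ncard hsub1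
    have hcrit := hA.2 A' hA'ind
    unfold diffSet at hcrit
    rw [← hNAdef] at hcrit
    have hfinal : T.ncard ≤ (A ∩ nbhdSet G T).ncard := by omega
    calc s.card = T.ncard := hTcard.symm
      _ ≤ (A ∩ nbhdSet G T).ncard := hfinal
      _ = (↑(s.biUnion t) : Set V).ncard := by rw [hbi]
      _ = (s.biUnion t).card := Set.ncard_coe_finset _
  obtain ⟨f, hfinj, hf⟩ := (Finset.all_card_le_biUnion_card_iff_exists_injective t).1 hall
  refine ⟨fun v => if h : v ∈ NA then f ⟨v, h⟩ else v, ?_, ?_⟩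
  · intro x hx y hy hxy
    simp only [dif_pos hx, dif_pos hy] at hxy
    exact congrArg Subtype.val (hfinj hxy)
  · intro x hx
    have h := (hmem ⟨x, hx⟩ _).1 (hf ⟨x, hx⟩)
    simp only [dif_pos hx]
    exact h

/-- If `A` and `B` are critical independent sets, then so is `B \ N(A)`. -/
lemma J_crit {A B : Set V} (hA : IsCriticalIndep G A) (hB : IsCriticalIndep G B) :
    IsCriticalIndep G (B \ nbhdSet G A) := by
  obtain ⟨g, hinj, hg⟩ := crit_hall G hA
  set J := B \ nbhdSet G A with hJdef
  set R := B ∩ nbhdSet G A with hRdef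
  have him : ∀ r ∈ R, g r ∈ nbhdSet G B \ nbhdSet G J := by
    intro r hr
    obtain ⟨hgA, hadj⟩ := hg r hr.2
    refine ⟨⟨r, hr.1, hadj⟩, ?_⟩
    rintro ⟨j, hj, hadj'⟩
    exact hj.2 ⟨g r, hgA, hadj'.symm⟩
  have hcard : R.ncard ≤ (nbhdSet G B \ nbhdSet G J).ncard :=
    Set.ncard_le_ncard_of_injOn g him (hinj.mono (fun r hr => hr.2))
  have hNJsub : nbhdSet G J ⊆ nbhdSet G B := nbhdSet_mono G Set.diff_subset
  have e1 : (nbhdSet G B \ nbhdSet G J).ncard + (nbhdSet G J).ncard = (nbhdSet G B).ncard :=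
    Set.ncard_diff_add_ncard_of_subset hNJsub
  have e2 : J.ncard + R.ncard = B.ncard := by
    rw [show J = B \ R by rw [hJdef, hRdef, Set.diff_self_inter]]
    exact Set.ncard_diff_add_ncard_of_subset Set.inter_subset_left
  have hd : diffSet G B ≤ diffSet G J := by
    unfold diffSet
    omega
  exact ⟨indep_subset G hB.1 Set.diff_subset, fun K hK => le_trans (hB.2 K hK) hd⟩

/-- If `A` and `B` are critical independent sets, then so is `A ∪ (B \ N(A))`. -/
lemma W_crit {A B : Set V} (hA : IsCriticalIndep G A) (hB : IsCriticalIndep G B) :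
    IsCriticalIndep G (A ∪ (B \ nbhdSet G A)) := by
  have hJ := J_crit G hA hB
  set J := B \ nbhdSet G A with hJdef
  have hind : IsIndep G (A ∪ J) := by
    intro u hu v hv hadj
    rcases hu with hu | hu <;> rcases hv with hv | hv
    · exact hA.1 hu hv hadj
    · exact hv.2 ⟨u, hu, hadj⟩
    · exact hu.2 ⟨v, hv, hadj.symm⟩
    · exact hB.1 hu.1 hv.1 hadj
  have hsup := supermod G A J
  have hAJ : diffSet G (A ∩ J) ≤ diffSet G A :=
    hA.2 _ (indep_subset G hA.1 Set.inter_subset_left)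
  have hd : diffSet G J ≤ diffSet G (A ∪ J) := by linarith
  exact ⟨hind, fun K hK => le_trans (hJ.2 K hK) hd⟩

/-- Every critical independent set is contained in some maximum-cardinality
critical independent set. -/
lemma exists_max_crit {C : Set V} (hC : IsCriticalIndep G C) :
    ∃ M, IsMaxCriticalIndep G M ∧ C ⊆ M := by
  classical
  set F : Set (Set V) := {S | IsCriticalIndep G S ∧ C ⊆ S} with hFdef
  have hne : F.Nonempty := ⟨C, hC, subset_rfl⟩
  obtain ⟨M, hMF, hmax⟩ := Set.Finite.exists_maximalFor Set.ncard F (Set.toFinite F) hne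
  have hMcrit : IsCriticalIndep G M := hMF.1
  have key : ∀ J, IsCriticalIndep G J → J ⊆ M ∪ nbhdSet G M := by
    intro J hJ
    have hW := W_crit G hMcrit hJ
    have hWF : (M ∪ (J \ nbhdSet G M)) ∈ F := ⟨hW, hMF.2.trans Set.subset_union_left⟩
    have hle : (M ∪ (J \ nbhdSet G M)).ncard ≤ M.ncard := by
      by_contra hcon
      push_neg at hcon
      have := hmax hWF (le_of_lt hcon)
      omega
    have heq : M ∪ (J \ nbhdSet G M) = M :=
      (Set.eq_of_subset_of_ncard_le Set.subset_union_left hle).symm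
    intro x hx
    by_cases hxN : x ∈ nbhdSet G M
    · exact Or.inr hxN
    · left
      have hx' : x ∈ M ∪ (J \ nbhdSet G M) := Or.inr ⟨hx, hxN⟩
      rwa [heq] at hx'
  obtain ⟨g, hinj, hg⟩ := crit_hall G hMcrit
  refine ⟨M, ⟨hMcrit, ?_⟩, hMF.2⟩
  intro J hJ
  have hJsub := key J hJ
  set X := J ∩ (nbhdSet G M \ M) with hXdef
  have hmaps : ∀ x ∈ X, g x ∈ M \ J := by
    intro x hx
    obtain ⟨hgM, hadj⟩ := hg x hx.2.1
    exact ⟨hgM, fun hgJ => hJ.1 hx.1 hgJ hadj⟩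
  have hcard1 : X.ncard ≤ (M \ J).ncard :=
    Set.ncard_le_ncard_of_injOn g hmaps (hinj.mono (fun x hx => hx.2.1))
  have hdecomp : J ⊆ (J ∩ M) ∪ X := by
    intro x hx
    rcases hJsub hx with h | h
    · exact Or.inl ⟨hx, h⟩
    · by_cases hxM : x ∈ M
      · exact Or.inl ⟨hx, hxM⟩
      · exact Or.inr ⟨hx, h, hxM⟩
  have hcard2 : J.ncard ≤ (J ∩ M).ncard + X.ncard :=
    le_trans (Set.ncard_le_ncard hdecomp) (Set.ncard_union_le _ _)
  have hcard3 : (M \ J).ncard + (J ∩ M).ncard = M.ncard := by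
    rw [show M \ J = M \ (J ∩ M) by rw [Set.inter_comm, ← Set.diff_self_inter]]
    exact Set.ncard_diff_add_ncard_of_subset Set.inter_subset_right
  omega

/-- Iterated `W_crit`: a critical independent set `W` extending `M` that
dominates every member of a finite family of critical independent sets. -/
lemma bigW_aux (F : Finset (Set V)) :
    ∀ M : Set V, IsCriticalIndep G M → (∀ S ∈ F, IsCriticalIndep G S) →
    ∃ W, IsCriticalIndep G W ∧ M ⊆ W ∧ ∀ S ∈ F, S ⊆ W ∪ nbhdSet G W := by
  classical
  induction F using Finset.induction_on with
  | empty =>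
    intro M hM _
    exact ⟨M, hM, subset_rfl, by simp⟩
  | @insert a F ha ih =>
    intro M hM hF
    obtain ⟨W, hW, hMW, hdom⟩ := ih M hM (fun S hS => hF S (Finset.mem_insert_of_mem hS))
    have haC : IsCriticalIndep G a := hF a (Finset.mem_insert_self a F)
    refine ⟨W ∪ (a \ nbhdSet G W), W_crit G hW haC,
      hMW.trans Set.subset_union_left, ?_⟩
    intro S hS x hx
    rcases Finset.mem_insert.1 hS with rfl | hS'
    · by_cases hxN : x ∈ nbhdSet G W
      · exact Or.inr (nbhdSet_mono G Set.subset_union_left hxN)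
      · exact Or.inl (Or.inr ⟨hx, hxN⟩)
    · rcases hdom S hS' hx with h | h
      · exact Or.inl (Or.inl h)
      · exact Or.inr (nbhdSet_mono G Set.subset_union_left h)

lemma indep_ncard_le_indepNum {S : Set V} (hS : IsIndep G S) : S.ncard ≤ indepNum G := by
  apply le_csSup
  · refine ⟨Fintype.card V, ?_⟩
    rintro n ⟨T, _, rfl⟩
    calc T.ncard ≤ (Set.univ : Set V).ncard := Set.ncard_le_ncard (Set.subset_univ T)
      _ = Fintype.card V := by rw [Set.ncard_univ, Nat.card_eq_fintype_card]
  · exact ⟨S, hS, rfl⟩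

end Aux

/-- For every finite simple graph `G`, `nucleus(G) ⊆ diadem(G)`
and `|diadem(G)| ≤ 2·α(G) − |nucleus(G)|`; more precisely, if `I_1, …, I_m`
enumerate all maximum-cardinality critical independent sets of `G`, then
`|⋃ j, I_j| ≤ 2·α(G) − |⋂ j, I_j|`. -/
theorem diadem_le_two_alpha_sub_nucleus (G : SimpleGraph V)
    (m : ℕ) (hm : 1 ≤ m) (I : Fin m → Set V)
    (hI : ∀ j, IsMaxCriticalIndep G (I j))
    (henum : ∀ S : Set V, IsMaxCriticalIndep G S → ∃ j, S = I j) :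
    nucleusSet G ⊆ diademSet G ∧
    ((diademSet G).ncard : ℤ) ≤ 2 * (indepNum G : ℤ) - (nucleusSet G).ncard ∧
    (((⋃ j, I j).ncard : ℤ) ≤ 2 * (indepNum G : ℤ) - (⋂ j, I j).ncard) := by
    classical
  have hM0 : IsMaxCriticalIndep G (I ⟨0, hm⟩) := hI ⟨0, hm⟩
  set M : Set V := I ⟨0, hm⟩ with hMdef
  have hnuc_sub : ∀ S, IsMaxCriticalIndep G S → nucleusSet G ⊆ S :=
    fun S hS => Set.sInter_subset_of_mem hS
  have hcrit_sub : ∀ S, IsCriticalIndep G S → S ⊆ diademSet G :=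
    fun S hS => Set.subset_sUnion_of_mem hS
  have part1 : nucleusSet G ⊆ diademSet G := (hnuc_sub M hM0).trans (hcrit_sub M hM0.1)
  obtain ⟨W, hWcrit, hMW, hWdom⟩ := bigW_aux G
      (Set.toFinite {S : Set V | IsCriticalIndep G S}).toFinset M hM0.1
      (fun S hS =>
        (Set.Finite.mem_toFinset (Set.toFinite {S : Set V | IsCriticalIndep G S})).1 hS)
  have hDW : diademSet G ⊆ W ∪ nbhdSet G W := by
    rintro x ⟨S, hS, hx⟩
    exact hWdom S ((Set.Finite.mem_toFinset _).2 hS) hx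
  have hWmax : IsMaxCriticalIndep G W :=
    ⟨hWcrit, fun J hJ => le_trans (hM0.2 J hJ) (Set.ncard_le_ncard hMW)⟩
  have hnuW : nucleusSet G ⊆ W := hnuc_sub W hWmax
  obtain ⟨g, hinj, hg⟩ := crit_hall G hWcrit
  set X := diademSet G ∩ (nbhdSet G W \ W) with hXdef
  have hmaps : ∀ x ∈ X, g x ∈ W \ nucleusSet G := by
    intro x hx
    obtain ⟨hgW, hadj⟩ := hg x hx.2.1
    refine ⟨hgW, fun hgnu => ?_⟩
    obtain ⟨S, hS, hxS⟩ := hx.1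
    obtain ⟨MS, hMS, hSMS⟩ := exists_max_crit G hS
    exact hMS.1.1 (hSMS hxS) (hnuc_sub MS hMS hgnu) hadj
  have hcard1 : X.ncard ≤ (W \ nucleusSet G).ncard :=
    Set.ncard_le_ncard_of_injOn g hmaps (hinj.mono (fun x hx => hx.2.1))
  have hcard2 : (W \ nucleusSet G).ncard + (nucleusSet G).ncard = W.ncard :=
    Set.ncard_diff_add_ncard_of_subset hnuW
  have hdecomp : diademSet G ⊆ (diademSet G ∩ W) ∪ X := by
    intro x hx
    rcases hDW hx with h | h
    · exact Or.inl ⟨hx, h⟩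
    · by_cases hxW : x ∈ W
      · exact Or.inl ⟨hx, hxW⟩
      · exact Or.inr ⟨hx, h, hxW⟩
  have hcard3 : (diademSet G).ncard ≤ (diademSet G ∩ W).ncard + X.ncard :=
    le_trans (Set.ncard_le_ncard hdecomp) (Set.ncard_union_le _ _)
  have hcard4 : (diademSet G ∩ W).ncard ≤ W.ncard :=
    Set.ncard_le_ncard Set.inter_subset_right
  have hcard5 : W.ncard ≤ indepNum G := indep_ncard_le_indepNum G hWcrit.1
  have part2 : ((diademSet G).ncard : ℤ) ≤ 2 * (indepNum G : ℤ) - (nucleusSet G).ncard := by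
    omega
  refine ⟨part1, part2, ?_⟩
  have hUsub : (⋃ j, I j) ⊆ diademSet G := Set.iUnion_subset (fun j => hcrit_sub _ (hI j).1)
  have hIeq : (⋂ j, I j) = nucleusSet G := by
    apply Set.Subset.antisymm
    · intro x hx
      apply Set.mem_sInter.2
      intro S hS
      obtain ⟨j, rfl⟩ := henum S hS
      exact Set.mem_iInter.1 hx j
    · exact Set.subset_iInter (fun j => hnuc_sub _ (hI j))
  have h6 : (⋃ j, I j).ncard ≤ (diademSet G).ncard := Set.ncard_le_ncard hUsub
  rw [hIeq]
  omega
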